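/- Let G be a group acting on a group K on the right by group automorphisms, and let φ : G → K be a bijective 1-cocycle, i.e. φ(fg) = (φ(f))^g · φ(g) for all f,g ∈ G. Then the map R : G × G → G × G defined by R(f,g) = (f·g·ψ(f,g)⁻¹, ψ(f,g)), where ψ(f,g) = φ⁻¹((φ(f))^g), is a bijection satisfying the Yang-Baxter equation (R × id)(id × R)(R × id) = (id × R)(R × id)(id × R). -/

import Mathlib

/-- `f × id` acting on triples. -/
def fstOp {G : Type*} (f : G × G → G × G) : G × G × G → G × G × G :=
  fun t => ((f (t.1, t.2.1)).1, (f (t.1, t.2.1)).2, t.2.2)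

/-- `id × f` acting on triples. -/
def sndOp {G : Type*} (f : G × G → G × G) : G × G × G → G × G × G :=
  fun t => (t.1, f t.2)

theorem cocycle_yang_baxter (G K : Type*) [Group G] [Group K]
    (act : K → G → K)
    (act_mul : ∀ u v : K, ∀ g : G, act (u * v) g = act u g * act v g)
    (act_comp : ∀ u : K, ∀ g h : G, act u (g * h) = act (act u g) h)
    (act_one : ∀ u : K, act u 1 = u)
    (φ : G → K) (φinv : K → G)
    (hleft : Function.LeftInverse φinv φ) (hright : Function.RightInverse φinv φ)
    (hcoc : ∀ f g : G, φ (f * g) = act (φ f) g * φ g) :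
    let ψ : G → G → G := fun f g => φinv (act (φ f) g)
    let R : G × G → G × G := fun p => (p.1 * p.2 * (ψ p.1 p.2)⁻¹, ψ p.1 p.2)
    Function.Bijective R ∧
      fstOp R ∘ sndOp R ∘ fstOp R = sndOp R ∘ fstOp R ∘ sndOp R := by
  intro ψ R
  have φinj : Function.Injective φ := hleft.injective
  have act1 : ∀ g : G, act 1 g = 1 := by
    intro g
    have h := act_mul 1 1 g
    rw [one_mul] at h
    exact right_eq_mul.mp h
  have act_inv : ∀ (u : K) (g : G), act u⁻¹ g = (act u g)⁻¹ := by
    intro u g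
    have h1 : act u g * act u⁻¹ g = 1 := by
      rw [← act_mul, mul_inv_cancel, act1]
    exact (eq_inv_of_mul_eq_one_left (by rw [← act_mul, inv_mul_cancel, act1]))
  have hφ1 : φ (1 : G) = 1 := by
    have h := hcoc 1 1
    rw [one_mul, act_one] at h
    exact right_eq_mul.mp h
  have hcanc : ∀ (u : K) (g : G), act (act u g) g⁻¹ = u := by
    intro u g; rw [← act_comp, mul_inv_cancel, act_one]
  have hcanc' : ∀ (u : K) (g : G), act (act u g⁻¹) g = u := by
    intro u g; rw [← act_comp, inv_mul_cancel, act_one]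
  have hginv : ∀ g : G, act (φ g⁻¹) g = (φ g)⁻¹ := by
    intro g
    have h := hcoc g⁻¹ g
    rw [inv_mul_cancel, hφ1] at h
    exact eq_inv_of_mul_eq_one_left h.symm
  have hψ : ∀ f g : G, φ (ψ f g) = act (φ f) g := by
    intro f g; exact hright _
  constructor
  · -- Bijectivity via explicit inverse
    rw [Function.bijective_iff_has_inverse]
    refine ⟨fun p => (p.1 * p.2 * (φinv ((φ p.2)⁻¹ * φ (p.1 * p.2)))⁻¹,
      φinv ((φ p.2)⁻¹ * φ (p.1 * p.2))), ?_, ?_⟩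
    · rintro ⟨f, g⟩
      simp only [R, ψ]
      have h1 : f * g * (φinv (act (φ f) g))⁻¹ * φinv (act (φ f) g) = f * g := by group
      rw [h1]
      have h2 : (φ (φinv (act (φ f) g)))⁻¹ * φ (f * g) = φ g := by
        rw [hright, hcoc]; group
      rw [h2, hleft]
      exact Prod.ext (by group) rfl
    · rintro ⟨a, b⟩
      simp only [R, ψ]
      set g : G := φinv ((φ b)⁻¹ * φ (a * b)) with hg
      have hφg : φ g = (φ b)⁻¹ * φ (a * b) := hright _
      have key : act (φ (a * b * g⁻¹)) g = φ b := by
        rw [hcoc (a * b) g⁻¹, act_mul, hcanc', hginv, hφg]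
        group
      rw [key, hleft]
      exact Prod.ext (by group) rfl
  · -- Yang-Baxter
    funext t
    obtain ⟨f, g, h⟩ := t
    simp only [fstOp, sndOp, Function.comp_apply, R]
    set a := ψ f g with ha
    set b := ψ a h with hb
    set p := ψ g h with hp
    set c := ψ (f * g * a⁻¹) (a * h * b⁻¹) with hc
    set q := ψ f (g * h * p⁻¹) with hq
    set r := ψ q p with hr
    have hφb : φ b = act (φ f) (g * h) := by
      rw [hb, hψ, ha, hψ, act_comp]
    have hφp : φ p = act (φ g) h := hψ g h
    have hφq : φ q = act (φ f) (g * h * p⁻¹) := hψ _ _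
    have hφr : φ r = act (φ f) (g * h) := by
      rw [hr, hψ, hφq, ← act_comp]
      congr 1; group
    have hbr : b = r := φinj (hφb.trans hφr.symm)
    have hcb : c * b = q * p := by
      apply φinj
      rw [hcoc, hcoc]
      have h1 : act (φ c) b = φ b * φ p * (φ b)⁻¹ := by
        rw [hc, hψ, ← act_comp]
        have h2 : a * h * b⁻¹ * b = a * h := by group
        rw [h2, hcoc (f * g) a⁻¹, act_mul, ← act_comp]
        have h3 : a⁻¹ * (a * h) = h := by group
        rw [h3, act_comp, hginv, act_inv, hcoc f g, act_mul, ← act_comp, ← hφb, ← hφp]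
        have h4 : act (φ a) h = φ b := by rw [hb, hψ a h]
        rw [h4]
      have h5 : act (φ q) p = φ b := by
        rw [hφq, ← act_comp, hφb]
        congr 1; group
      rw [h1, h5]
      group
    have hceq : c = q * p * b⁻¹ := by rw [← hcb]; group
    refine Prod.ext ?_ (Prod.ext ?_ ?_)
    · show f * g * a⁻¹ * (a * h * b⁻¹) * c⁻¹ = f * (g * h * p⁻¹) * q⁻¹
      rw [hceq]; group
    · show c = q * p * r⁻¹
      rw [hceq, hbr]
    · exact hbr
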